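/- Suppose ‖Γ^m_j‖ ≤ C₀ ξ^{m−j} for all m ≥ j ≥ 0 and let a = ‖γ − γ̃‖ (sup norms). Let ξ̃ > 2ξ and C₀ a ξ̃⁻¹ ≤ 1/4. Then the operator L acting on sequences of operators by (L Γ̃)^k = ∑_{j=0}^{k−1} Γ^k_{j+1} [γ̃ − γ]_{θ+jω} Γ̃^j_θ is a contraction with norm ≤ 1/2 in the Banach space of sequences with norm ‖Γ̃‖_{ξ̃} = sup_k ξ̃^{−k} ‖Γ̃^k‖; consequently the perturbed cocycle satisfies ‖Γ̃^m‖ ≤ C̃₀ ξ̃^m with explicit constants. -/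
import Mathlib


/-- The rotation of the torus `T^d = (ℝ/ℤ)^d` by the vector `ω ∈ ℝ^d`. -/
noncomputable def torusRot (d : ℕ) (ω : Fin d → ℝ) : Fin d → AddCircle (1 : ℝ) :=
  fun i => (ω i : AddCircle (1 : ℝ))

/-- Contraction estimate for the Duhamel operator: if the partial products of `γ` satisfy
`‖Γ^m_j‖ ≤ C₀ ξ^{m-j}`, `a = ‖γ - γ̃‖`, `ξ̃ > 2ξ` and `C₀ a ξ̃⁻¹ ≤ 1/4`, then the operator
`(L B)^k = ∑_{j<k} Γ^k_{j+1} [γ̃ - γ]_{θ+jω} B^j` contracts with factor `≤ 1/2` in the norm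
`‖B‖_{ξ̃} = sup_k ξ̃^{-k} ‖B^k‖`; consequently the perturbed cocycle satisfies
`‖Γ̃^m‖ ≤ C̃₀ ξ̃^m`. -/
theorem duhamel_operator_contraction
    {d n : ℕ} (ω : Fin d → ℝ)
    (γ γt : (Fin d → AddCircle (1 : ℝ)) → ((Fin n → ℝ) →L[ℝ] (Fin n → ℝ)))
    (Γp : ℕ → ℕ → (Fin d → AddCircle (1 : ℝ)) → ((Fin n → ℝ) →L[ℝ] (Fin n → ℝ)))
    (Γt : ℕ → (Fin d → AddCircle (1 : ℝ)) → ((Fin n → ℝ) →L[ℝ] (Fin n → ℝ)))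
    (C₀ ξ a ξt : ℝ) (hC₀ : 0 < C₀) (hξ : 0 < ξ)
    (hΓp0 : ∀ j θ, Γp j j θ = ContinuousLinearMap.id ℝ (Fin n → ℝ))
    (hΓpS : ∀ k j θ, j ≤ k →
      Γp (k + 1) j θ = (γ (θ + k • torusRot d ω)).comp (Γp k j θ))
    (hΓt0 : ∀ θ, Γt 0 θ = ContinuousLinearMap.id ℝ (Fin n → ℝ))
    (hΓtS : ∀ j θ, Γt (j + 1) θ = (γt (θ + j • torusRot d ω)).comp (Γt j θ))
    (hΓpb : ∀ m j : ℕ, j ≤ m → ∀ θ, ‖Γp m j θ‖ ≤ C₀ * ξ ^ (m - j))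
    (ha : ∀ θ, ‖γ θ - γt θ‖ ≤ a)
    (hξt : 2 * ξ < ξt)
    (hsmall : C₀ * a * ξt⁻¹ ≤ 1 / 4) :
    (∀ (B : ℕ → (Fin d → AddCircle (1 : ℝ)) → ((Fin n → ℝ) →L[ℝ] (Fin n → ℝ))) (b : ℝ),
      (∀ k θ, ‖B k θ‖ ≤ b * ξt ^ k) →
      ∀ k θ,
        ‖∑ j ∈ Finset.range k,
            (Γp k (j + 1) θ).comp
              ((γt (θ + j • torusRot d ω) - γ (θ + j • torusRot d ω)).comp (B j θ))‖
          ≤ (1 / 2) * (b * ξt ^ k)) ∧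
    (∃ C' : ℝ, ∀ m θ, ‖Γt m θ‖ ≤ C' * ξt ^ m) := by
  have hξt0 : (0:ℝ) < ξt := lt_trans (by linarith) hξt
  have ha0 : 0 ≤ a := le_trans (norm_nonneg _) (ha (fun _ => 0))
  have hCa : C₀ * a ≤ ξt / 4 := by
    have h := mul_le_mul_of_nonneg_right hsmall hξt0.le
    calc C₀ * a = C₀ * a * ξt⁻¹ * ξt := by field_simp
      _ ≤ (1/4) * ξt := h
      _ = ξt / 4 := by ring
  -- key contraction estimate
  have key : ∀ (b : ℝ), 0 ≤ b →
      ∀ (B : ℕ → (Fin d → AddCircle (1 : ℝ)) → ((Fin n → ℝ) →L[ℝ] (Fin n → ℝ))),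
      ∀ (k : ℕ) θ, (∀ j, j < k → ‖B j θ‖ ≤ b * ξt ^ j) →
        ‖∑ j ∈ Finset.range k,
            (Γp k (j + 1) θ).comp
              ((γt (θ + j • torusRot d ω) - γ (θ + j • torusRot d ω)).comp (B j θ))‖
          ≤ (1 / 2) * (b * ξt ^ k) := by
    intro b hb B k θ hB
    rcases Nat.eq_zero_or_pos k with rfl | hk
    · simp
      positivity
    calc ‖∑ j ∈ Finset.range k,
            (Γp k (j + 1) θ).comp
              ((γt (θ + j • torusRot d ω) - γ (θ + j • torusRot d ω)).comp (B j θ))‖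
        ≤ ∑ j ∈ Finset.range k, C₀ * a * b * ξt ^ (k-1) * (1/2:ℝ) ^ (k - (j+1)) := by
          refine le_trans (norm_sum_le _ _) (Finset.sum_le_sum ?_)
          intro j hj
          have hjk : j < k := Finset.mem_range.mp hj
          have h1 : ‖Γp k (j+1) θ‖ ≤ C₀ * ξ ^ (k - (j+1)) := hΓpb k (j+1) hjk θ
          have h2 : ‖γt (θ + j • torusRot d ω) - γ (θ + j • torusRot d ω)‖ ≤ a := by
            rw [norm_sub_rev]; exact ha _
          have h3 : ‖B j θ‖ ≤ b * ξt ^ j := hB j hjk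
          have he : (k - (j+1)) + j = k - 1 := by omega
          calc _ ≤ ‖Γp k (j+1) θ‖ * (‖γt (θ + j • torusRot d ω) - γ (θ + j • torusRot d ω)‖ * ‖B j θ‖) := by
                refine le_trans (ContinuousLinearMap.opNorm_comp_le _ _) ?_
                gcongr
                exact ContinuousLinearMap.opNorm_comp_le _ _
            _ ≤ (C₀ * ξ ^ (k - (j+1))) * (a * (b * ξt ^ j)) := by
                gcongr
            _ = (C₀ * a * b * ξt ^ j) * ξ ^ (k - (j+1)) := by ring
            _ ≤ (C₀ * a * b * ξt ^ j) * (ξt * (1/2)) ^ (k - (j+1)) := by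
                have hnn : 0 ≤ C₀ * a * b * ξt ^ j := by positivity
                exact mul_le_mul_of_nonneg_left
                  (pow_le_pow_left₀ hξ.le (by linarith) _) hnn
            _ = C₀ * a * b * (ξt ^ (k - (j+1)) * ξt ^ j) * (1/2:ℝ) ^ (k - (j+1)) := by
                rw [mul_pow]; ring
            _ = C₀ * a * b * ξt ^ (k-1) * (1/2:ℝ) ^ (k - (j+1)) := by
                rw [← pow_add, he]
      _ = C₀ * a * b * ξt ^ (k-1) * ∑ j ∈ Finset.range k, (1/2:ℝ) ^ (k - (j+1)) := by
          rw [← Finset.mul_sum]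
      _ ≤ C₀ * a * b * ξt ^ (k-1) * 2 := by
          have hnn : 0 ≤ C₀ * a * b * ξt ^ (k-1) := by positivity
          refine mul_le_mul_of_nonneg_left ?_ hnn
          have hre : ∑ j ∈ Finset.range k, (1/2:ℝ) ^ (k - (j+1))
              = ∑ j ∈ Finset.range k, (1/2:ℝ) ^ j := by
            rw [show (∑ j ∈ Finset.range k, (1/2:ℝ) ^ (k - (j+1)))
                = ∑ j ∈ Finset.range k, (1/2:ℝ) ^ (k - 1 - j) from
              Finset.sum_congr rfl (fun j hj => by congr 1; omega)]
            exact Finset.sum_range_reflect (fun i => (1/2:ℝ) ^ i) k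
          rw [hre]
          exact sum_geometric_two_le k
      _ ≤ (1 / 2) * (b * ξt ^ k) := by
          have hkk : k - 1 + 1 = k := by omega
          have hknn : 0 ≤ ξt ^ (k-1) := pow_nonneg hξt0.le _
          have hxk : ξt ^ k = ξt ^ (k-1) * ξt := by rw [← pow_succ, hkk]
          rw [hxk]
          nlinarith [mul_nonneg (sub_nonneg.mpr hCa) (mul_nonneg hb hknn)]
  -- Duhamel identity
  have duh : ∀ (m : ℕ) θ, Γt m θ = Γp m 0 θ + ∑ j ∈ Finset.range m,
      (Γp m (j + 1) θ).comp
        ((γt (θ + j • torusRot d ω) - γ (θ + j • torusRot d ω)).comp (Γt j θ)) := by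
    intro m
    induction m with
    | zero => intro θ; simp [hΓt0, hΓp0]
    | succ m ih =>
      intro θ
      rw [hΓtS, Finset.sum_range_succ, hΓp0, hΓpS m 0 θ (Nat.zero_le _)]
      have hsum : ∀ j ∈ Finset.range m,
          (Γp (m+1) (j + 1) θ).comp
            ((γt (θ + j • torusRot d ω) - γ (θ + j • torusRot d ω)).comp (Γt j θ))
          = (γ (θ + m • torusRot d ω)).comp ((Γp m (j + 1) θ).comp
            ((γt (θ + j • torusRot d ω) - γ (θ + j • torusRot d ω)).comp (Γt j θ))) := by
        intro j hj
        rw [hΓpS m (j+1) θ (Finset.mem_range.mp hj), ContinuousLinearMap.comp_assoc]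
      rw [Finset.sum_congr rfl hsum]
      simp only [← ContinuousLinearMap.mul_def, ← ContinuousLinearMap.one_def]
      have ih' : Γt m θ = Γp m 0 θ + ∑ j ∈ Finset.range m,
          Γp m (j + 1) θ * ((γt (θ + j • torusRot d ω) - γ (θ + j • torusRot d ω)) * Γt j θ) := by
        rw [ih θ]; simp only [← ContinuousLinearMap.mul_def]
      rw [← Finset.mul_sum, ← add_assoc, ← mul_add, ← ih', one_mul, sub_mul]
      abel
  -- bound on the perturbed cocycle
  have bound : ∀ (m : ℕ) θ, ‖Γt m θ‖ ≤ 2 * C₀ * ξt ^ m := by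
    intro m
    induction m using Nat.strong_induction_on with
    | _ m ih =>
      intro θ
      rw [duh m θ]
      have h1 : ‖Γp m 0 θ‖ ≤ C₀ * ξ ^ m := by simpa using hΓpb m 0 (Nat.zero_le _) θ
      have h2 := key (2*C₀) (by positivity) Γt m θ (fun j hj => ih j hj θ)
      have hxm : ξ ^ m ≤ ξt ^ m := pow_le_pow_left₀ hξ.le (by linarith) m
      calc ‖Γp m 0 θ + _‖ ≤ ‖Γp m 0 θ‖ + _ := norm_add_le _ _
        _ ≤ C₀ * ξ ^ m + (1/2) * (2*C₀ * ξt ^ m) := add_le_add h1 h2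
        _ ≤ 2 * C₀ * ξt ^ m := by nlinarith [pow_nonneg hξt0.le m]
  constructor
  · intro B b hB k θ
    have hb : 0 ≤ b := by
      have h := hB 0 (fun _ => 0)
      simp at h
      linarith [norm_nonneg (B 0 (fun _ => 0))]
    exact key b hb B k θ (fun j _ => hB j θ)
  · exact ⟨2 * C₀, bound⟩
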